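/- Let (e_n, e_n^*) be a biorthogonal system in a Banach space X and x ∈ X with finitely many nonzero coefficients outside a finite set. For α > 0, define the truncation T_α x = ∑_n T_α(e_n^*(x)) e_n where T_α(z) = α·sgn(z) if |z| ≥ α and T_α(z) = z otherwise. Then T_α x = ∫_0^1 (I − P_{Λ_{α,s}}) x ds, where Λ_{α,s} = {n : |e_n^*(x)| > α/s} and P_Λ x = ∑_{n∈Λ} e_n^*(x) e_n. -/

import Mathlib

open MeasureTheory

/-- Integral representation of the truncation operator: for a biorthogonal system, a
vector `x` with finitely supported coefficients and `α > 0`,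
`T_α x = ∫_0^1 (I - P_{Λ_{α,s}}) x ds`, where `Λ_{α,s} = {n : |e_n^*(x)| > α/s}` and
`T_α x = ∑_{|e_n^*(x)|>α} α sgn(e_n^*(x)) e_n + (I - P_{Λ_α}) x`. -/
theorem stmt_10 {X : Type*} [NormedAddCommGroup X] [NormedSpace ℝ X] [CompleteSpace X]
    (e : ℕ → X) (f : ℕ → X →L[ℝ] ℝ)
    (hbi : ∀ m n, f m (e n) = if m = n then 1 else 0)
    (x : X) (S : Finset ℕ) (hS : ∀ n ∉ S, f n x = 0)
    (α : ℝ) (hα : 0 < α) :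
    (∑ n ∈ S.filter fun n => α < |f n x|, (α * Real.sign (f n x)) • e n)
        + (x - ∑ n ∈ S.filter fun n => α < |f n x|, f n x • e n)
      = ∫ s in Set.Ioc (0 : ℝ) 1,
          (x - ∑ n ∈ S.filter fun n => α / s < |f n x|, f n x • e n) := by
  set T := S.filter fun n => α < |f n x| with hT
  have habs : ∀ n ∈ T, 0 < |f n x| ∧ α < |f n x| := by
    intro n hn
    have := (Finset.mem_filter.mp hn).2
    exact ⟨hα.trans this, this⟩
  -- rewrite the integrand
  have key : ∀ s ∈ Set.Ioc (0:ℝ) 1,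
      (x - ∑ n ∈ S.filter fun n => α / s < |f n x|, f n x • e n)
      = x - ∑ n ∈ T, (Set.Ioc (α / |f n x|) 1).indicator (fun _ => f n x • e n) s := by
    intro s hs
    obtain ⟨hs0, hs1⟩ := hs
    congr 1
    rw [Finset.sum_indicator_eq_sum_filter]
    congr 1
    rw [hT, Finset.filter_filter]
    apply Finset.filter_congr
    intro n hnS
    simp only [Set.mem_Ioc]
    constructor
    · intro h
      rw [div_lt_iff₀ hs0] at h
      have hc : 0 < |f n x| := by
        nlinarith [abs_nonneg (f n x)]
      refine ⟨?_, ?_, hs1⟩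
      · calc α < |f n x| * s := h
          _ ≤ |f n x| * 1 := by nlinarith
          _ = |f n x| := mul_one _
      · rw [div_lt_iff₀ hc]; linarith [mul_comm s (|f n x|)]
    · rintro ⟨hna, hss, -⟩
      have hc : 0 < |f n x| := hα.trans hna
      rw [div_lt_iff₀ hs0]
      rw [div_lt_iff₀ hc] at hss
      linarith [mul_comm s (|f n x|)]
  rw [setIntegral_congr_fun measurableSet_Ioc key]
  have hint : ∀ n ∈ T, Integrable
      (fun s => (Set.Ioc (α / |f n x|) 1).indicator (fun _ => f n x • e n) s)
      (volume.restrict (Set.Ioc (0:ℝ) 1)) :=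
    fun n _ => (integrable_const _).indicator measurableSet_Ioc
  rw [integral_sub (integrable_const x) (integrable_finset_sum _ hint),
    integral_finset_sum _ hint]
  have hterm : ∀ n ∈ T,
      (∫ s in Set.Ioc (0:ℝ) 1, (Set.Ioc (α / |f n x|) 1).indicator (fun _ => f n x • e n) s)
      = (1 - α / |f n x|) • (f n x • e n) := by
    intro n hn
    obtain ⟨hc, hac⟩ := habs n hn
    have ha0 : 0 < α / |f n x| := div_pos hα hc
    have ha1 : α / |f n x| < 1 := (div_lt_one hc).mpr hac
    rw [setIntegral_indicator measurableSet_Ioc, setIntegral_const,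
      Set.Ioc_inter_Ioc]
    rw [max_eq_right ha0.le, min_self, Real.volume_real_Ioc_of_le (by linarith)]
  rw [Finset.sum_congr rfl hterm, setIntegral_const, Real.volume_real_Ioc_of_le zero_le_one]
  norm_num
  have hsign : ∀ n ∈ T, (1 - α / |f n x|) • (f n x • e n)
      = f n x • e n - (α * Real.sign (f n x)) • e n := by
    intro n hn
    obtain ⟨hc, -⟩ := habs n hn
    have hne : f n x ≠ 0 := by simpa [abs_pos] using hc
    rw [smul_smul, ← sub_smul]
    congr 1
    rcases lt_or_gt_of_ne hne with h | h
    · rw [Real.sign_of_neg h, abs_of_neg h, div_neg, sub_neg_eq_add, add_mul, one_mul,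
        div_mul_cancel₀ _ hne]
      ring
    · rw [Real.sign_of_pos h, abs_of_pos h]
      field_simp
  rw [Finset.sum_congr rfl hsign, Finset.sum_sub_distrib]
  abel
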